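/- Let p be an odd prime, n ≥ 2, and A an integer with |A| < p/2, p ∤ A. If p > n³(n+3) and A does not admit a representation A = (t·p - r)/s with integers r, s, t satisfying gcd(r,s) = 1, s > 0, and 1 ≤ |r| + s ≤ n, then for all i, j with 0 ≤ i, j < n there exists x with 1 ≤ x ≤ p-1, x ≡ i (mod n), and least positive residue of A·x mod p congruent to j (mod n). -/

import Mathlib

/-- Covering lemma: two lattice vectors with opposite-sign residues cover the circle. -/
lemma cover_lemma (P B q1 r1 q2 r2 G : ℤ) (hP : 0 < P)
    (hq1 : 1 ≤ q1) (hq2 : 1 ≤ q2) (hr1 : 1 ≤ r1) (hr2 : 1 ≤ r2)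
    (h1 : P ∣ q1 * B - r1) (h2 : P ∣ q2 * B + r2)
    (hg1 : r1 ≤ G) (hg2 : r2 ≤ G) (c : ℤ) :
    ∃ u : ℤ, 1 ≤ u ∧ u ≤ q1 + q2 ∧ (u * B - c) % P < G := by
  have hPne : P ≠ 0 := ne_of_gt hP
  suffices h : ∀ V : ℕ, ∀ u : ℤ, 1 ≤ u → u ≤ q1 + q2 →
      ((u * B - c) % P).toNat ≤ V →
      ∃ u' : ℤ, 1 ≤ u' ∧ u' ≤ q1 + q2 ∧ (u' * B - c) % P < G by
    refine h ((1 * B - c) % P).toNat 1 le_rfl (by linarith) le_rfl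
  intro V
  induction V with
  | zero =>
    intro u hu1 hu2 hV
    refine ⟨u, hu1, hu2, ?_⟩
    have h0 : 0 ≤ (u * B - c) % P := Int.emod_nonneg _ hPne
    have : ((u * B - c) % P) = 0 := by omega
    omega
  | succ V ih =>
    intro u hu1 hu2 hV
    set d := (u * B - c) % P with hd
    have hd0 : 0 ≤ d := Int.emod_nonneg _ hPne
    have hdP : d < P := Int.emod_lt_of_pos _ hP
    by_cases hdg : d < G
    · exact ⟨u, hu1, hu2, hdg⟩
    push_neg at hdg
    have hdvd_d : P ∣ (u * B - c) - d := Int.dvd_self_sub_of_emod_eq rfl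
    by_cases hcase : u ≤ q1
    · -- move to u + q2, value d - r2
      have hnew : ((u + q2) * B - c) % P = d - r2 := by
        have hdvd : P ∣ ((u + q2) * B - c) - (d - r2) := by
          have : ((u + q2) * B - c) - (d - r2) = ((u * B - c) - d) + (q2 * B + r2) := by ring
          rw [this]
          exact dvd_add hdvd_d h2
        have heq : ((u + q2) * B - c) % P = (d - r2) % P :=
          Int.emod_eq_emod_iff_emod_sub_eq_zero.mpr (Int.emod_eq_zero_of_dvd hdvd)
        rw [heq]
        exact Int.emod_eq_of_lt (by omega) (by omega)
      refine ih (u + q2) (by linarith) (by linarith) ?_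
      rw [hnew]
      omega
    · -- move to u - q1, value d - r1
      push_neg at hcase
      have hnew : ((u - q1) * B - c) % P = d - r1 := by
        have hdvd : P ∣ ((u - q1) * B - c) - (d - r1) := by
          have : ((u - q1) * B - c) - (d - r1) = ((u * B - c) - d) - (q1 * B - r1) := by ring
          rw [this]
          exact dvd_sub hdvd_d h1
        have heq : ((u - q1) * B - c) % P = (d - r1) % P :=
          Int.emod_eq_emod_iff_emod_sub_eq_zero.mpr (Int.emod_eq_zero_of_dvd hdvd)
        rw [heq]
        exact Int.emod_eq_of_lt (by omega) (by omega)
      refine ih (u - q1) (by omega) (by omega) ?_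
      rw [hnew]
      omega

structure CFS where
  a : ℤ
  b : ℤ
  x : ℤ
  y : ℤ
  e : ℤ

def cfStep (s : CFS) : CFS :=
  if 0 < s.b then ⟨s.b, s.a % s.b, s.y, (s.a / s.b) * s.y + s.x, -s.e⟩ else s

def cfSeq (P B : ℤ) (k : ℕ) : CFS := cfStep^[k] ⟨P, B, 0, 1, 1⟩

def CFInv (P B : ℤ) (s : CFS) : Prop :=
  0 ≤ s.b ∧ s.b < s.a ∧ 0 ≤ s.x ∧ 1 ≤ s.y ∧ s.y * s.a + s.x * s.b = P ∧
  (s.e = 1 ∨ s.e = -1) ∧ (P ∣ (s.y * B - s.e * s.b)) ∧ (P ∣ (s.x * B + s.e * s.a)) ∧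
  s.a ≤ P ∧ (s.a = P → s.b = B)

lemma cfInv_step (P B : ℤ) (s : CFS) (h : CFInv P B s) : CFInv P B (cfStep s) := by
  obtain ⟨h1, h2, h3, h4, h5, h6, h7, h8, h9, h10⟩ := h
  unfold cfStep
  by_cases hb : 0 < s.b
  · simp only [if_pos hb]
    have hdiv1 : 1 ≤ s.a / s.b := by
      rw [Int.le_ediv_iff_mul_le hb]; linarith
    have hmod : s.a % s.b = s.a - s.b * (s.a / s.b) := Int.emod_def s.a s.b
    refine ⟨Int.emod_nonneg _ (ne_of_gt hb), Int.emod_lt_of_pos _ hb, by linarith,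
        ?_, ?_, ?_, ?_, ?_, ?_, ?_⟩
    · show 1 ≤ (s.a / s.b) * s.y + s.x
      nlinarith
    · show ((s.a / s.b) * s.y + s.x) * s.b + s.y * (s.a % s.b) = P
      rw [hmod]; ring_nf; linarith [h5]
    · show -s.e = 1 ∨ -s.e = -1
      rcases h6 with h | h <;> simp [h]
    · show P ∣ ((s.a / s.b) * s.y + s.x) * B - (-s.e) * (s.a % s.b)
      have key : ((s.a / s.b) * s.y + s.x) * B - (-s.e) * (s.a % s.b)
          = (s.a / s.b) * (s.y * B - s.e * s.b) + (s.x * B + s.e * s.a) := by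
        rw [hmod]; ring
      rw [key]
      exact dvd_add (Dvd.dvd.mul_left h7 _) h8
    · show P ∣ s.y * B + (-s.e) * s.b
      have : s.y * B + (-s.e) * s.b = s.y * B - s.e * s.b := by ring
      rw [this]; exact h7
    · show s.b ≤ P
      linarith
    · show s.b = P → s.a % s.b = B
      intro hbP
      exfalso; linarith
  · simp only [if_neg hb]
    exact ⟨h1, h2, h3, h4, h5, h6, h7, h8, h9, h10⟩

lemma cfInv_seq (P B : ℤ) (hB0 : 0 ≤ B) (hBP : B < P) (k : ℕ) :
    CFInv P B (cfSeq P B k) := by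
  induction k with
  | zero =>
    have h0 : cfSeq P B 0 = ⟨P, B, 0, 1, 1⟩ := rfl
    rw [h0]
    refine ⟨hB0, hBP, le_rfl, le_rfl, by ring, Or.inl rfl, ?_, ?_, le_rfl, fun _ => rfl⟩
    · show P ∣ 1 * B - 1 * B; simp
    · show P ∣ 0 * B + 1 * P; simp
  | succ k ih =>
    rw [cfSeq, Function.iterate_succ_apply']
    exact cfInv_step P B _ ih

lemma cfSeq_succ (P B : ℤ) (k : ℕ) : cfSeq P B (k+1) = cfStep (cfSeq P B k) := by
  rw [cfSeq, Function.iterate_succ_apply']; rfl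

/-- eventually b becomes nonpositive -/
lemma cf_terminates (P B : ℤ) : ∃ k, (cfSeq P B k).b ≤ 0 := by
  by_contra h
  push_neg at h
  have hdec : ∀ k, ((cfSeq P B (k+1)).b).toNat < ((cfSeq P B k).b).toNat := by
    intro k
    have hb := h k
    rw [cfSeq_succ]
    unfold cfStep
    simp only [if_pos hb]
    have h1 : (cfSeq P B k).a % (cfSeq P B k).b < (cfSeq P B k).b :=
      Int.emod_lt_of_pos _ hb
    have h2 : 0 ≤ (cfSeq P B k).a % (cfSeq P B k).b := Int.emod_nonneg _ (ne_of_gt hb)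
    omega
  have hle : ∀ k, ((cfSeq P B k).b).toNat + k ≤ ((cfSeq P B 0).b).toNat := by
    intro k
    induction k with
    | zero => omega
    | succ k ih => have := hdec k; omega
  have := hle (((cfSeq P B 0).b).toNat + 1)
  omega
lemma pos_dvd_prime (P a : ℤ) (hP : Prime P) (hP0 : 0 < P) (ha : 0 < a) (h : a ∣ P) : a = 1 ∨ a = P := by
  have h1 : a.natAbs ∣ P.natAbs := Int.natAbs_dvd_natAbs.mpr h
  have h2 : Nat.Prime P.natAbs := Int.prime_iff_natAbs_prime.mp hP
  rcases (Nat.Prime.eq_one_or_self_of_dvd h2 _ h1) with h3 | h3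
  · left; omega
  · right; omega

set_option maxHeartbeats 2000000 in
lemma exists_pair (P B n Q : ℤ) (hP : Prime P) (hB1 : 1 ≤ B) (hBP : B < P)
    (hn : 2 ≤ n) (hQ1 : 1 ≤ Q) (hQP : Q < P)
    (hnQ : n * Q ≤ P - n) (hnQ2 : P - 2 * n + 1 ≤ n * Q)
    (hPbig : n ^ 4 + 3 * n ^ 3 + 1 ≤ P)
    (hNC : ∀ s t : ℤ, 1 ≤ s → P ∣ (s * B - t) → n + 1 ≤ s + |t|) :
    ∃ q1 r1 q2 r2 : ℤ, 1 ≤ q1 ∧ 1 ≤ r1 ∧ 1 ≤ q2 ∧ 1 ≤ r2 ∧ q1 + q2 ≤ Q ∧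
      r1 ≤ Q ∧ r2 ≤ Q ∧ (P ∣ (q1 * B - r1)) ∧ (P ∣ (q2 * B + r2)) := by
  have hP0 : 0 < P := by nlinarith [pow_pos (show (0:ℤ) < n by linarith) 4, pow_pos (show (0:ℤ) < n by linarith) 3]
  have hB0 : 0 ≤ B := by linarith
  have hn0 : (0:ℤ) < n := by linarith
  have hQbig : 4 * n + 3 ≤ Q := by
    have h1 : n * (4 * n + 3) ≤ n * Q := by nlinarith [hnQ2, hPbig, hn, sq_nonneg (n - 2), sq_nonneg n]
    exact le_of_mul_le_mul_left h1 hn0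
  -- existence of an index where x+y exceeds Q
  have hbig_ex : ∃ k, Q < (cfSeq P B k).x + (cfSeq P B k).y := by
    obtain ⟨k, hk⟩ := cf_terminates P B
    obtain ⟨h1, h2, h3, h4, h5, h6, h7, h8, h9, h10⟩ := cfInv_seq P B hB0 hBP k
    have hb0 : (cfSeq P B k).b = 0 := le_antisymm hk h1
    have hya : (cfSeq P B k).a * (cfSeq P B k).y = P := by
      rw [hb0] at h5; linarith [h5]
    have hadvd : (cfSeq P B k).a ∣ P := Dvd.intro _ hya
    have ha0 : 0 < (cfSeq P B k).a := by rw [hb0] at h2; exact h2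
    rcases pos_dvd_prime P _ hP hP0 ha0 hadvd with h | h
    · refine ⟨k, ?_⟩
      rw [h] at hya
      omega
    · exfalso
      have := h10 h
      rw [this] at hb0
      omega
  classical
  obtain ⟨m, hm_spec, hm_min⟩ : ∃ m : ℕ, (Q < (cfSeq P B m).x + (cfSeq P B m).y) ∧
      ∀ k : ℕ, k < m → ¬(Q < (cfSeq P B k).x + (cfSeq P B k).y) :=
    ⟨Nat.find hbig_ex, Nat.find_spec hbig_ex, fun k hk => Nat.find_min hbig_ex hk⟩
  have hm_pos : 0 < m := by
    rcases Nat.eq_zero_or_pos m with h | h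
    · exfalso
      rw [h] at hm_spec
      have h0 : cfSeq P B 0 = ⟨P, B, 0, 1, 1⟩ := rfl
      rw [h0] at hm_spec
      simp at hm_spec
      omega
    · exact h
  have hm_pred : ¬ Q < (cfSeq P B (m-1)).x + (cfSeq P B (m-1)).y :=
    hm_min (m-1) (by omega)
  -- package the state data into opaque variables
  have pack : ∃ a b x y e : ℤ, 0 < b ∧ b < a ∧ 0 ≤ x ∧ 1 ≤ y ∧
      y * a + x * b = P ∧ (e = 1 ∨ e = -1) ∧ (P ∣ (y * B - e * b)) ∧
      (P ∣ (x * B + e * a)) ∧ x + y ≤ Q ∧ Q < y + ((a / b) * y + x) := by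
    obtain ⟨h1, h2, h3, h4, h5, h6, h7, h8, h9, h10⟩ := cfInv_seq P B hB0 hBP (m-1)
    have hstep : cfSeq P B m = cfStep (cfSeq P B (m-1)) := by
      rw [← cfSeq_succ]
      congr 1
      omega
    have hb_pos : 0 < (cfSeq P B (m-1)).b := by
      by_contra hb
      rw [hstep] at hm_spec
      unfold cfStep at hm_spec
      rw [if_neg hb] at hm_spec
      exact hm_pred hm_spec
    have hbig' : Q < (cfSeq P B (m-1)).y +
        (((cfSeq P B (m-1)).a / (cfSeq P B (m-1)).b) * (cfSeq P B (m-1)).y + (cfSeq P B (m-1)).x) := by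
      rw [hstep] at hm_spec
      unfold cfStep at hm_spec
      rw [if_pos hb_pos] at hm_spec
      simpa using hm_spec
    push_neg at hm_pred
    exact ⟨_, _, _, _, _, hb_pos, h2, h3, h4, h5, h6, h7, h8, hm_pred, hbig'⟩
  obtain ⟨a, b, x, y, e, hb_pos, hba, hx0, hy1, hid, he, hc1, hc2, hxyQ, hbig'⟩ := pack
  clear hm_spec hm_pred
  -- the semiconvergent index
  set i := (Q - x - y) / y with hi
  have hy0 : (0:ℤ) < y := by linarith
  have hi0 : 0 ≤ i := Int.ediv_nonneg (by linarith) (by linarith)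
  have hiy_le : i * y ≤ Q - x - y := by
    have := Int.ediv_mul_le (Q - x - y) (ne_of_gt hy0)
    linarith [this]
  have hiy_ge : Q - x - 2 * y + 1 ≤ i * y := by
    have := Int.lt_ediv_add_one_mul_self (Q - x - y) hy0
    nlinarith [this]
  have hsum : x + (i + 1) * y ≤ Q := by nlinarith
  have hilt : i < a / b := by
    by_contra hcon
    push_neg at hcon
    have : (a/b) * y ≤ i * y := by nlinarith
    nlinarith
  set ρ := a - i * b with hρ
  have hmod : a % b = a - b * (a / b) := Int.emod_def a b
  have hmod0 : 0 ≤ a % b := Int.emod_nonneg _ (ne_of_gt hb_pos)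
  have hρ1 : 1 ≤ ρ := by
    have : i * b ≤ (a/b - 1) * b := by nlinarith
    nlinarith
  -- non-criticality: n + 1 ≤ y + b
  have hyb : n + 1 ≤ y + b := by
    have hthis := hNC y (e * b) (by linarith) hc1
    have habs : |e * b| = b := by
      rcases he with h | h <;> rw [h] <;> simp [abs_of_nonneg (le_of_lt hb_pos)]
    rw [habs] at hthis
    linarith
  have hF1 : y * b ≤ P - y := by nlinarith
  have hF2 : b * (Q + 1 - y) ≤ P := by
    have hyy : Q + 1 - y ≤ (a/b) * y + x := by linarith
    have hdb : (a/b) * b ≤ a := by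
      have := Int.ediv_mul_le a (ne_of_gt hb_pos)
      linarith
    calc b * (Q + 1 - y) ≤ b * ((a/b) * y + x) := by nlinarith
    _ = ((a/b) * b) * y + x * b := by ring
    _ ≤ a * y + x * b := by nlinarith
    _ = P := by linarith [hid]
  have hb2n : b ≤ 2 * n + 1 := by
    by_contra hcon
    push_neg at hcon
    have hbQ1 : b * (Q + 1) ≤ 2 * P - 1 := by nlinarith
    have hnQ1 : P - n + 1 ≤ n * (Q + 1) := by linarith
    nlinarith [mul_le_mul_of_nonneg_left hbQ1 (le_of_lt hn0),
      mul_le_mul_of_nonneg_left hnQ1 (by linarith : (0:ℤ) ≤ 2*n+2)]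
  have hmaster : P + 2 * y * b ≤ Q * y + (Q + 1) * b := by
    have hkey : 0 ≤ (y - (n + 1 - b)) * (Q - 2 * b) := by
      apply mul_nonneg <;> nlinarith
    have h8n : 8 * P + (2*n+1)^2 ≤ 8 * (n+1) * Q := by
      have hstep1 : n * (8 * P + (2*n+1)^2) ≤ n * (8 * (n+1) * Q) := by
        nlinarith [hnQ2, hPbig, hn]
      exact le_of_mul_le_mul_left hstep1 hn0
    nlinarith [hkey, h8n, sq_nonneg (4 * b - 2 * n - 1)]
  have hρQ : ρ ≤ Q := by
    have hstep1 : ρ * y ≤ P - (Q + 1) * b + 2 * y * b := by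
      have : (Q - x - 2*y + 1) * b ≤ i * y * b := by nlinarith
      nlinarith [hid]
    have : ρ * y ≤ Q * y := by nlinarith
    exact le_of_mul_le_mul_right this hy0
  set q2' := x + i * y with hq2'
  have hq2'1 : 1 ≤ q2' := by
    rcases lt_or_ge 0 x with hx | hx
    · nlinarith
    · have hx00 : x = 0 := le_antisymm hx hx0
      have hya : y * a = P := by rw [hx00] at hid; linarith [hid]
      have hy1' : y = 1 := by
        have hydvd : y ∣ P := ⟨a, hya.symm⟩
        rcases pos_dvd_prime P _ hP hP0 hy0 hydvd with h | h
        · exact h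
        · exfalso; omega
      have hiQ : i = Q - 1 := by
        rw [hi, hx00, hy1']
        simp
      rw [hq2', hx00, hy1', hiQ]
      linarith
  have hbQ : b ≤ Q := by linarith
  rcases he with he | he
  · refine ⟨y, b, q2', ρ, by linarith, by linarith, hq2'1, hρ1, by nlinarith, hbQ, hρQ, ?_, ?_⟩
    · have := hc1; rw [he] at this; simpa using this
    · have key : q2' * B + ρ = (x * B + a) + i * (y * B - b) := by
        rw [hq2', hρ]; ring
      rw [key]
      have h7' : P ∣ y * B - b := by have := hc1; rw [he] at this; simpa using this
      have h8' : P ∣ x * B + a := by have := hc2; rw [he] at this; simpa using this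
      exact dvd_add h8' (Dvd.dvd.mul_left h7' _)
  · refine ⟨q2', ρ, y, b, hq2'1, hρ1, by linarith, by linarith, by nlinarith, hρQ, hbQ, ?_, ?_⟩
    · have key : q2' * B - ρ = (x * B - a) + i * (y * B + b) := by
        rw [hq2', hρ]; ring
      rw [key]
      have h7' : P ∣ y * B + b := by
        have := hc1; rw [he] at this
        have e2 : y * B - (-1) * b = y * B + b := by ring
        rwa [e2] at this
      have h8' : P ∣ x * B - a := by
        have := hc2; rw [he] at this
        have e2 : x * B + (-1) * a = x * B - a := by ring
        rwa [e2] at this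
      exact dvd_add h8' (Dvd.dvd.mul_left h7' _)
    · have := hc1; rw [he] at this
      have e2 : y * B - (-1) * b = y * B + b := by ring
      rwa [e2] at this

set_option maxHeartbeats 2000000 in
theorem stmt_19 (p n A : ℤ) (hp : Prime p) (hodd : Odd p) (hn : 2 ≤ n)
    (hAsize : 2 * |A| < p) (hpA : ¬ p ∣ A)
    (hplarge : n ^ 3 * (n + 3) < p)
    (hnotcrit : ¬ ∃ r s t : ℤ, Int.gcd r s = 1 ∧ 0 < s ∧
      1 ≤ |r| + s ∧ |r| + s ≤ n ∧ s * A = t * p - r) :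
    ∀ i j : ℤ, 0 ≤ i → i < n → 0 ≤ j → j < n →
      ∃ x : ℤ, 1 ≤ x ∧ x ≤ p - 1 ∧ x % n = i ∧ ((A * x) % p) % n = j := by
  intro i j hi0 hin hj0 hjn
  have hn0 : (0:ℤ) < n := by linarith
  have hPbig : n ^ 4 + 3 * n ^ 3 + 1 ≤ p := by nlinarith [hplarge]
  have hp0 : 0 < p := by nlinarith [pow_pos hn0 4, pow_pos hn0 3]
  have hpn : n < p := by nlinarith [pow_pos hn0 4, pow_pos hn0 3]
  have hp' : Nat.Prime p.natAbs := Int.prime_iff_natAbs_prime.mp hp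
  -- B = A mod p
  set B := A % p with hB
  have hB0 : 0 ≤ B := Int.emod_nonneg A (ne_of_gt hp0)
  have hBp : B < p := Int.emod_lt_of_pos A hp0
  have hABdvd : p ∣ A - B := by
    refine ⟨A / p, ?_⟩
    have := Int.emod_def A p
    linarith
  have hB1 : 1 ≤ B := by
    rcases lt_or_ge 0 B with h | h
    · linarith
    · exfalso
      have hB00 : B = 0 := le_antisymm h hB0
      exact hpA (Int.dvd_of_emod_eq_zero hB00)
  -- Q
  set Q := (p - n) / n with hQ
  have hnQ : n * Q ≤ p - n := by
    have := Int.ediv_mul_le (p - n) (ne_of_gt hn0)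
    linarith [mul_comm Q n]
  have hnQ2 : p - 2 * n + 1 ≤ n * Q := by
    have := Int.lt_ediv_add_one_mul_self (p - n) hn0
    nlinarith [this]
  have hQ1 : 1 ≤ Q := by
    have h00 : 0 ≤ n ^ 2 - 1 := by nlinarith
    have hnn : n ≤ n ^ 3 := by nlinarith [mul_nonneg hn0.le h00]
    have h0 : 3 * n - 1 ≤ p := by nlinarith [pow_pos hn0 4]
    have h1 : n * 1 ≤ n * Q := by linarith
    exact le_of_mul_le_mul_left h1 hn0
  have hQp : Q < p := by nlinarith [hnQ, hQ1, hn]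
  -- non-criticality in terms of B
  have hNC : ∀ s t : ℤ, 1 ≤ s → p ∣ (s * B - t) → n + 1 ≤ s + |t| := by
    intro s t hs hdvd
    by_contra hcon
    push_neg at hcon
    have hstn : s + |t| ≤ n := by omega
    have habs : 0 ≤ |t| := abs_nonneg t
    have hdvdA : p ∣ s * A - t := by
      have heq : s * A - t = (s * B - t) + s * (A - B) := by ring
      rw [heq]
      exact dvd_add hdvd (Dvd.dvd.mul_left hABdvd s)
    obtain ⟨k, hk⟩ := hdvdA
    set r0 := -t with hr0
    have hsA : s * A = k * p - r0 := by rw [hr0]; linarith [hk]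
    set g := Int.gcd r0 s with hg
    have hg_r : (g:ℤ) ∣ r0 := Int.gcd_dvd_left _ _
    have hg_s : (g:ℤ) ∣ s := Int.gcd_dvd_right _ _
    have hgne : g ≠ 0 := by
      intro h0
      rw [hg] at h0
      have := (Int.gcd_eq_zero_iff.mp h0).2
      omega
    have hg0 : (0:ℤ) < (g:ℤ) := by positivity
    have hgle : (g:ℤ) ≤ s := Int.le_of_dvd (by linarith) hg_s
    have hgp : (g:ℤ) ∣ k * p := by
      have h1 : k * p = s * A + r0 := by linarith [hsA]
      rw [h1]
      exact dvd_add (Dvd.dvd.mul_right hg_s A) hg_r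
    have hcop : IsCoprime ((g:ℤ)) p := by
      rw [Int.isCoprime_iff_gcd_eq_one]
      have hnd : ¬ p.natAbs ∣ g := by
        intro hdd
        have h1 := Nat.le_of_dvd (by omega) hdd
        have h2 : (g:ℤ) ≤ n := by linarith
        omega
      have := (Nat.Prime.coprime_iff_not_dvd hp').mpr hnd
      have h3 : Int.gcd (g:ℤ) p = Nat.gcd g p.natAbs := by
        show Nat.gcd ((g:ℤ)).natAbs p.natAbs = Nat.gcd g p.natAbs
        rw [Int.natAbs_natCast]
      rw [h3]
      exact Nat.Coprime.symm this
    have hgk : (g:ℤ) ∣ k := hcop.dvd_of_dvd_mul_right hgp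
    set r' := r0 / (g:ℤ) with hr'
    set s' := s / (g:ℤ) with hs'
    set t' := k / (g:ℤ) with ht'
    have hr'g : r' * (g:ℤ) = r0 := Int.ediv_mul_cancel hg_r
    have hs'g : s' * (g:ℤ) = s := Int.ediv_mul_cancel hg_s
    have ht'g : t' * (g:ℤ) = k := Int.ediv_mul_cancel hgk
    have hs'pos : 0 < s' := by nlinarith [hs'g]
    have habs' : |r'| * (g:ℤ) = |r0| := by
      rw [← hr'g, abs_mul]
      congr 1
      exact (abs_of_pos hg0).symm
    have habsle : |r'| ≤ |r0| := by nlinarith [abs_nonneg r']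
    refine hnotcrit ⟨r', s', t', ?_, hs'pos, ?_, ?_, ?_⟩
    · rw [hr', hs', hg]
      exact Int.gcd_div_gcd_div_gcd (by omega)
    · linarith [abs_nonneg r']
    · have : |r0| = |t| := by rw [hr0, abs_neg]
      have hs'le : s' ≤ s := by nlinarith [hs'g]
      linarith [habsle, this ▸ habsle]
    · have hzero : (s' * A - (t' * p - r')) * (g:ℤ) = 0 := by
        have expand : (s' * A - (t' * p - r')) * (g:ℤ)
            = (s' * (g:ℤ)) * A - (t' * (g:ℤ)) * p + (r' * (g:ℤ)) := by ring
        rw [expand, hr'g, hs'g, ht'g]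
        linarith [hsA]
      have := mul_eq_zero.mp hzero
      rcases this with h | h
      · linarith [h]
      · exfalso; exact hgne (by exact_mod_cast h)
  -- inverse of n mod p
  have hcopn : IsCoprime (n:ℤ) p := by
    rw [Int.isCoprime_iff_gcd_eq_one]
    have hnd : ¬ p.natAbs ∣ n.natAbs := by
      intro hdd
      have h1 := Nat.le_of_dvd (by omega) hdd
      omega
    have := (Nat.Prime.coprime_iff_not_dvd hp').mpr hnd
    exact Nat.Coprime.symm this
  obtain ⟨α, β, hαβ⟩ := hcopn
  set e0 := α * (j - A * i) with he0def
  have he0 : p ∣ n * e0 - (j - A * i) := by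
    refine ⟨-β * (j - A * i), ?_⟩
    rw [he0def]
    linear_combination (j - A * i) * hαβ
  -- get the pair and cover
  obtain ⟨q1, r1, q2, r2, hq1, hr1, hq2, hr2, hsum, hr1Q, hr2Q, hdvd1, hdvd2⟩ :=
    exists_pair p B n Q hp hB1 hBp hn hQ1 hQp hnQ hnQ2 hPbig hNC
  obtain ⟨u, hu1, hu2, hud⟩ :=
    cover_lemma p B q1 r1 q2 r2 Q hp0 hq1 hq2 hr1 hr2 hdvd1 hdvd2 hr1Q hr2Q (e0 + 1)
  set d := (u * B - (e0 + 1)) % p with hd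
  have hd0 : 0 ≤ d := Int.emod_nonneg _ (ne_of_gt hp0)
  have hudvd : p ∣ (u * B - (e0 + 1)) - d := Int.dvd_self_sub_of_emod_eq rfl
  have huQ : u ≤ Q := by linarith
  refine ⟨i + n * u, by nlinarith, by nlinarith [mul_le_mul_of_nonneg_left huQ (le_of_lt hn0)], ?_, ?_⟩
  · rw [Int.add_mul_emod_self_left]
    exact Int.emod_eq_of_lt hi0 hin
  · set yv := j + n * (d + 1) with hyv
    have hyv1 : 1 ≤ yv := by nlinarith
    have hyvp : yv ≤ p - 1 := by
      have hdQ : d + 1 ≤ Q := by omega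
      nlinarith [mul_le_mul_of_nonneg_left hdQ (le_of_lt hn0)]
    have hdvd_main : p ∣ A * (i + n * u) - yv := by
      have key : A * (i + n * u) - yv
          = (n * e0 - (j - A * i)) + n * ((u * B - (e0 + 1)) - d) + (n * u) * (A - B) := by
        rw [hyv]; ring
      rw [key]
      exact dvd_add (dvd_add he0 (Dvd.dvd.mul_left hudvd n)) (Dvd.dvd.mul_left hABdvd (n * u))
    have hmodp : (A * (i + n * u)) % p = yv := by
      have h1 : (A * (i + n * u)) % p = yv % p :=
        Int.emod_eq_emod_iff_emod_sub_eq_zero.mpr (Int.emod_eq_zero_of_dvd hdvd_main)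
      rw [h1]
      exact Int.emod_eq_of_lt (by linarith) (by linarith)
    rw [hmodp, hyv, Int.add_mul_emod_self_left]
    exact Int.emod_eq_of_lt hj0 hjn
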